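/- Suppose a sequence of continuous functions dₙ on the closed second quadrant D̄₂, analytic in the interior, converges uniformly on D̄₂ to a function d, each dₙ is nonvanishing on D̄₂, d is nonvanishing on ∂D₂, and dₙ(k), d(k) → 1 uniformly as |k| → ∞. Then d is nonvanishing on all of D̄₂. -/

import Mathlib

/-- The closed second quadrant. -/
def closedD2 : Set ℂ := {k : ℂ | k.re ≤ 0 ∧ 0 ≤ k.im}

/-- The open second quadrant. -/
def openD2 : Set ℂ := {k : ℂ | k.re < 0 ∧ 0 < k.im}

/-- The boundary of the second quadrant. -/
def bdryD2 : Set ℂ := {k : ℂ | (k.im = 0 ∧ k.re ≤ 0) ∨ (k.re = 0 ∧ 0 ≤ k.im)}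

lemma isOpen_openD2 : IsOpen openD2 :=
  (isOpen_lt Complex.continuous_re continuous_const).inter
    (isOpen_lt continuous_const Complex.continuous_im)

lemma openD2_subset_closedD2 : openD2 ⊆ closedD2 :=
  fun _ hk => ⟨le_of_lt hk.1, le_of_lt hk.2⟩

lemma convex_openD2 : Convex ℝ openD2 := by
  intro x hx y hy a b ha hb hab
  have hre : (a • x + b • y).re = a * x.re + b * y.re := by
    simp [Complex.add_re, Complex.smul_re]
  have him : (a • x + b • y).im = a * x.im + b * y.im := by
    simp [Complex.add_im, Complex.smul_im]
  constructor
  · rw [hre]; show a * x.re + b * y.re < 0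
    have := (convex_Iio (0:ℝ)) hx.1 hy.1 ha hb hab
    simpa using this
  · rw [him]; show 0 < a * x.im + b * y.im
    have := (convex_Ioi (0:ℝ)) hx.2 hy.2 ha hb hab
    simpa using this

theorem hurwitz_type_sector
    (dn : ℕ → ℂ → ℂ) (d : ℂ → ℂ)
    (hdn_cont : ∀ n, ContinuousOn (dn n) closedD2)
    (hdn_anal : ∀ n, DifferentiableOn ℂ (dn n) openD2)
    (hd_cont : ContinuousOn d closedD2)
    (hd_anal : DifferentiableOn ℂ d openD2)
    (hconv : TendstoUniformlyOn dn d Filter.atTop closedD2)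
    (hdn_nz : ∀ n, ∀ k ∈ closedD2, dn n k ≠ 0)
    (hd_bd : ∀ k ∈ bdryD2, d k ≠ 0)
    (hlim : ∀ ε > 0, ∃ R, ∀ k ∈ closedD2, R ≤ ‖k‖ →
      ‖d k - 1‖ < ε ∧ ∀ n, ‖dn n k - 1‖ < ε) :
    ∀ k ∈ closedD2, d k ≠ 0 := by
  intro k₀ hk₀ hzero
  -- k₀ must be interior
  have hk₀o : k₀ ∈ openD2 := by
    rcases lt_or_eq_of_le hk₀.1 with h1 | h1
    · rcases lt_or_eq_of_le hk₀.2 with h2 | h2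
      · exact ⟨h1, h2⟩
      · exact absurd hzero (hd_bd k₀ (Or.inl ⟨h2.symm, hk₀.1⟩))
    · exact absurd hzero (hd_bd k₀ (Or.inr ⟨h1, hk₀.2⟩))
  -- d is analytic on openD2
  have hdA : AnalyticOnNhd ℂ d openD2 := hd_anal.analyticOnNhd isOpen_openD2
  -- d is not identically zero on openD2
  have hnotzero : ¬ Set.EqOn d 0 openD2 := by
    intro heq
    obtain ⟨R, hR⟩ := hlim 1 one_pos
    set z : ℂ := ⟨-(|R| + 1), |R| + 1⟩ with hz
    have hzre : z.re = -(|R| + 1) := rfl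
    have hzim : z.im = |R| + 1 := rfl
    have hpos : (0:ℝ) < |R| + 1 := by positivity
    have hzo : z ∈ openD2 := ⟨by rw [hzre]; linarith, by rw [hzim]; linarith⟩
    have habs : R ≤ ‖z‖ := by
      have := Complex.abs_im_le_norm z
      rw [hzim] at this
      calc R ≤ |R| := le_abs_self R
        _ ≤ |R| + 1 := by linarith
        _ ≤ ‖z‖ := by rw [abs_of_pos hpos] at this; exact this
    have := (hR z (openD2_subset_closedD2 hzo) habs).1
    rw [heq hzo] at this
    simp at this
  -- zeros of d are isolated near k₀
  have hA : AnalyticAt ℂ d k₀ := hdA k₀ hk₀o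
  rcases hA.eventually_eq_zero_or_eventually_ne_zero with hev | hev
  · -- identically zero near k₀ → identically zero on openD2, contradiction
    exact hnotzero (hdA.eqOn_zero_of_preconnected_of_eventuallyEq_zero
      convex_openD2.isPreconnected hk₀o hev)
  · -- d ≠ 0 in punctured neighborhood
    rw [Filter.eventually_iff, Metric.mem_nhdsWithin_iff] at hev
    obtain ⟨r₀, hr₀, hball⟩ := hev
    obtain ⟨r₁, hr₁, hball₁⟩ := Metric.isOpen_iff.mp isOpen_openD2 k₀ hk₀o
    set r := min (r₀ / 2) (r₁ / 2) with hr
    have hrpos : 0 < r := lt_min (by linarith) (by linarith)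
    have hsub : Metric.closedBall k₀ r ⊆ openD2 := fun z hz => hball₁ (by
      rw [Metric.mem_closedBall] at hz
      rw [Metric.mem_ball]
      calc dist z k₀ ≤ r := hz
        _ ≤ r₁ / 2 := min_le_right _ _
        _ < r₁ := by linarith)
    have hsphere_ne : ∀ z ∈ Metric.sphere k₀ r, d z ≠ 0 := by
      intro z hz
      have hd0 : dist z k₀ = r := hz
      have : z ∈ Metric.ball k₀ r₀ ∩ {k₀}ᶜ := by
        constructor
        · rw [Metric.mem_ball, hd0]
          calc r ≤ r₀ / 2 := min_le_left _ _
            _ < r₀ := by linarith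
        · simp only [Set.mem_compl_iff, Set.mem_singleton_iff]
          intro h; rw [h] at hd0; simp at hd0; linarith [hd0 ▸ hrpos]
      exact hball this
    -- minimum of |d| on sphere
    have hsc : IsCompact (Metric.sphere k₀ r) := isCompact_sphere k₀ r
    have hsne : (Metric.sphere k₀ r).Nonempty := NormedSpace.sphere_nonempty.mpr hrpos.le
    have hcont : ContinuousOn (fun z => ‖d z‖) (Metric.sphere k₀ r) :=
      continuous_norm.comp_continuousOn
        (hd_cont.mono (fun z hz => openD2_subset_closedD2 (hsub (Metric.sphere_subset_closedBall hz))))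
    obtain ⟨zs, hzs, hmin⟩ := hsc.exists_isMinOn hsne hcont
    set m := ‖d zs‖ with hm
    have hmpos : 0 < m := by
      have := hsphere_ne zs hzs
      simpa [hm] using this
    -- uniform convergence
    rw [Metric.tendstoUniformlyOn_iff] at hconv
    obtain ⟨N, hN⟩ := (hconv (m/3) (by linarith)).exists
    -- bound dn N below on sphere
    have hlb : ∀ z ∈ Metric.sphere k₀ r, 2*m/3 ≤ ‖dn N z‖ := by
      intro z hz
      have hzc : z ∈ closedD2 :=
        openD2_subset_closedD2 (hsub (Metric.sphere_subset_closedBall hz))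
      have h1 : dist (d z) (dn N z) < m/3 := hN z hzc
      have h2 : m ≤ ‖d z‖ := hmin hz
      have h3 : ‖d z‖ - ‖dn N z‖ ≤ ‖d z - dn N z‖ := by
        simpa using norm_sub_norm_le (d z) (dn N z)
      rw [dist_eq_norm] at h1
      linarith
    -- maximum modulus for (dn N)⁻¹ on ball
    have hinvd : DiffContOnCl ℂ (fun z => (dn N z)⁻¹) (Metric.ball k₀ r) := by
      constructor
      · apply DifferentiableOn.inv
        · exact (hdn_anal N).mono (fun z hz => hsub (Metric.ball_subset_closedBall hz))
        · exact fun z hz => hdn_nz N z (openD2_subset_closedD2 (hsub (Metric.ball_subset_closedBall hz)))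
      · rw [closure_ball k₀ hrpos.ne']
        apply ContinuousOn.inv₀
        · exact (hdn_cont N).mono (fun z hz => openD2_subset_closedD2 (hsub hz))
        · exact fun z hz => hdn_nz N z (openD2_subset_closedD2 (hsub hz))
    have hbd : ∀ z ∈ frontier (Metric.ball k₀ r), ‖(dn N z)⁻¹‖ ≤ 3/(2*m) := by
      rw [frontier_ball k₀ hrpos.ne']
      intro z hz
      have hnz := hdn_nz N z (openD2_subset_closedD2 (hsub (Metric.sphere_subset_closedBall hz)))
      rw [norm_inv, inv_le_comm₀ (norm_pos_iff.mpr hnz) (by positivity)]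
      calc (3/(2*m))⁻¹ = 2*m/3 := by field_simp
        _ ≤ ‖dn N z‖ := by simpa using hlb z hz
    have hk₀mem : k₀ ∈ closure (Metric.ball k₀ r) := by
      rw [closure_ball k₀ hrpos.ne']
      exact Metric.mem_closedBall_self hrpos.le
    have hmax := Complex.norm_le_of_forall_mem_frontier_norm_le
      Metric.isBounded_ball hinvd hbd hk₀mem
    -- so |dn N k₀| ≥ 2m/3
    have hnzk₀ := hdn_nz N k₀ hk₀
    have hub : 2*m/3 ≤ ‖dn N k₀‖ := by
      rw [norm_inv, inv_le_comm₀ (norm_pos_iff.mpr hnzk₀) (by positivity)] at hmax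
      calc 2*m/3 = (3/(2*m))⁻¹ := by field_simp
        _ ≤ ‖dn N k₀‖ := hmax
    -- but dn N k₀ close to d k₀ = 0
    have hclose := hN k₀ hk₀
    rw [dist_eq_norm, hzero] at hclose
    simp only [zero_sub, norm_neg] at hclose
    linarith
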